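/- Suppose the game (G,f) contains (H,h) with V(G)\V(H) nonempty, and let K = max{f(v) : v ∈ V(G)\V(H)}. If H is not [h,t]-paintable, then G is not [f,k]-paintable for every integer k with max{t,K} ≤ k ≤ t + Σ_{v ∈ V(G)\V(H)} f(v). In particular, m(G,f) ≤ max{K, m(H,h)} and M(G,f) ≥ M(H,h) + Σ_{v ∈ V(G)\V(H)} f(v). -/

import Mathlib

/- # Preliminaries: the online list-coloring (painting) game -/

namespace PaintGame

open SimpleGraph

/-- `X` is an independent set of vertices of `G`. -/
def IndepOn {V : Type} (G : SimpleGraph V) (X : Finset V) : Prop :=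
  ∀ u ∈ X, ∀ w ∈ X, ¬ G.Adj u w

/-- Decrease the remaining mark-capacity of every vertex in the marked set `M` by one. -/
def decMark {V : Type} [DecidableEq V] (f : V → ℕ) (M : Finset V) : V → ℕ :=
  fun v => if v ∈ M then f v - 1 else f v

theorem decMark_lt {V : Type} [Fintype V] [DecidableEq V] (f : V → ℕ) (M : Finset V)
    (hne : M.Nonempty) (hf : ∀ v ∈ M, 1 ≤ f v) :
    ∑ v, decMark f M v < ∑ v, f v := by
  obtain ⟨v₀, hv₀⟩ := hne
  apply Finset.sum_lt_sum
  · intro i _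
    unfold decMark
    split <;> omega
  · refine ⟨v₀, Finset.mem_univ v₀, ?_⟩
    have := hf v₀ hv₀
    simp only [decMark, if_pos hv₀]
    omega

/-- Painter wins the (unbounded) painting game on `G` from the position in which `U` is the
set of uncolored vertices and `f v` is the number of further times `v` may be marked.
Each round, Lister marks a nonempty set `M` of uncolored vertices, each of which may still
be marked; Painter then colors an independent subset `X` of `M`.  Painter wins when every
vertex is colored; Painter has lost if some uncolored vertex can no longer be marked. -/
def PaintFrom {V : Type} [Fintype V] [DecidableEq V] (G : SimpleGraph V)
    (f : V → ℕ) (U : Finset V) : Prop :=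
  U = ∅ ∨ ((∀ v ∈ U, 1 ≤ f v) ∧
    ∀ M : Finset V, M ⊆ U → (hne : M.Nonempty) → (hf : ∀ v ∈ M, 1 ≤ f v) →
      ∃ X : Finset V, X ⊆ M ∧ IndepOn G X ∧ PaintFrom G (decMark f M) (U \ X))
termination_by ∑ v, f v
decreasing_by exact decMark_lt f M hne hf

/-- `G` is `f`-paintable: Painter can guarantee that every vertex of `G` gets colored
while no vertex `v` is marked more than `f v` times. -/
def Paintable {V : Type} [Fintype V] [DecidableEq V] (G : SimpleGraph V) (f : V → ℕ) : Prop :=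
  PaintFrom G f Finset.univ

/-- Painter wins the painting game on `G` lasting exactly `t` further rounds, where `U`
is the set of uncolored vertices and each vertex `v` must be marked in exactly `f v` of the
remaining rounds.  Each round Lister marks a nonempty set `M` of vertices that can still be
marked (colored vertices may be marked, since the marked sets are the color classes of a
fixed list assignment using exactly `t` colors); Painter colors an independent set
`X ⊆ M` of uncolored vertices.  At the end, Painter wins if every vertex got colored, or by
default if Lister failed to mark every vertex `v` exactly `f v` times. -/
def PaintFromIn {V : Type} [DecidableEq V] (G : SimpleGraph V) :
    ℕ → (V → ℕ) → Finset V → Prop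
  | 0, f, U => U = ∅ ∨ ∃ v, f v ≠ 0
  | (t + 1), f, U =>
      ∀ M : Finset V, M.Nonempty → (∀ v ∈ M, 1 ≤ f v) →
        ∃ X : Finset V, X ⊆ M ∩ U ∧ IndepOn G X ∧
          PaintFromIn G t (decMark f M) (U \ X)

/-- `G` is `[f,t]`-paintable: Painter can guarantee that every vertex gets colored in the
painting game on `G` lasting exactly `t` rounds, in which Lister must mark each vertex `v`
in exactly `f v` of the `t` (nonempty) marked sets. -/
def PaintableIn {V : Type} [Fintype V] [DecidableEq V]
    (G : SimpleGraph V) (f : V → ℕ) (t : ℕ) : Prop :=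
  PaintFromIn G t f Finset.univ

/-- `m(G,f)`: the minimum `t ≥ max {f v : v ∈ V(G)}` for which `G` is not
`[f,t]`-paintable. -/
noncomputable def mval {V : Type} [Fintype V] [DecidableEq V]
    (G : SimpleGraph V) (f : V → ℕ) : ℕ :=
  sInf {t | (∀ v, f v ≤ t) ∧ ¬ PaintableIn G f t}

/-- `M(G,f)`: the maximum `t` for which `G` is not `[f,t]`-paintable. -/
noncomputable def Mval {V : Type} [Fintype V] [DecidableEq V]
    (G : SimpleGraph V) (f : V → ℕ) : ℕ :=
  sSup {t | ¬ PaintableIn G f t}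

/-- `ListerForce G f U c`: in the painting game on `G` (uncolored set `U`, each vertex `v`
markable at most `f v` more times), Lister can force the appearance of an uncolorable vertex
(an uncolored vertex that can no longer be marked) while spending at most `c` in total,
where a round with marked set `M` costs `|M| - 1`. -/
def ListerForce {V : Type} [Fintype V] [DecidableEq V] (G : SimpleGraph V)
    (f : V → ℕ) (U : Finset V) (c : ℕ) : Prop :=
  (∃ v ∈ U, f v = 0) ∨
    ∃ M : Finset V, M ⊆ U ∧ ∃ hne : M.Nonempty, ∃ hf : ∀ v ∈ M, 1 ≤ f v,
      ∃ c', M.card - 1 + c' ≤ c ∧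
        ∀ X : Finset V, X ⊆ M → IndepOn G X →
          ListerForce G (decMark f M) (U \ X) c'
termination_by ∑ v, f v
decreasing_by exact decMark_lt f M hne hf

/-- `q(G,f)`: the minimum total cost `Σᵢ (|Vᵢ| - 1)` that Lister can guarantee while
forcing an uncolorable vertex, over plays in which each vertex `v` is marked at most
`f v` times. -/
noncomputable def qval {V : Type} [Fintype V] [DecidableEq V]
    (G : SimpleGraph V) (f : V → ℕ) : ℕ :=
  sInf {c | ListerForce G f Finset.univ c}

/- # Graph containments -/

/-- `G` contains an odd cycle. -/
def HasOddCycle {V : Type} (G : SimpleGraph V) : Prop :=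
  ∃ (v : V) (c : G.Walk v v), c.IsCycle ∧ Odd c.length

/-- `G` contains a triangle `C₃`. -/
def HasTriangle {V : Type} (G : SimpleGraph V) : Prop :=
  ∃ u v w : V, G.Adj u v ∧ G.Adj v w ∧ G.Adj u w

/-- `G` contains the theta graph `θ_{p,q,r}`: two vertices joined by three internally
disjoint paths with `p`, `q` and `r` edges respectively. -/
def HasTheta {V : Type} (G : SimpleGraph V) (p q r : ℕ) : Prop :=
  ∃ (u v : V) (P Q R : G.Walk u v),
    P.IsPath ∧ Q.IsPath ∧ R.IsPath ∧
    P.length = p ∧ Q.length = q ∧ R.length = r ∧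
    (∀ x, x ∈ P.support → x ∈ Q.support → x = u ∨ x = v) ∧
    (∀ x, x ∈ P.support → x ∈ R.support → x = u ∨ x = v) ∧
    (∀ x, x ∈ Q.support → x ∈ R.support → x = u ∨ x = v)

/-- `G` contains a graph of the form `C_m·P_k·C_n`: two cycles joined by a path, the
cycles being vertex disjoint, except that when the path is trivial (`k = 1`) the two
cycles share exactly one vertex. -/
def HasDumbbell {V : Type} (G : SimpleGraph V) : Prop :=
  ∃ (a b : V) (c : G.Walk a a) (d : G.Walk b b) (W : G.Walk a b),
    c.IsCycle ∧ d.IsCycle ∧ W.IsPath ∧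
    (∀ x, x ∈ c.support → x ∈ d.support → x = a ∧ x = b) ∧
    (∀ x, x ∈ W.support → x ∈ c.support → x = a) ∧
    (∀ x, x ∈ W.support → x ∈ d.support → x = b)

/-- `G` contains a copy of `H` as a (not necessarily induced) subgraph. -/
def ContainsCopy {W V : Type} (H : SimpleGraph W) (G : SimpleGraph V) : Prop :=
  ∃ φ : H →g G, Function.Injective φ

/-- `G` contains a member of the family `𝔉₃`: some `θ_{p,q,r}` that is not isomorphic to
any `θ_{2,2,2k}`. -/
def ContainsF3 {V : Type} (G : SimpleGraph V) : Prop :=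
  ∃ p q r : ℕ, HasTheta G p q r ∧ ∀ k : ℕ, ({p, q, r} : Multiset ℕ) ≠ {2, 2, 2 * k}

/-- `G` contains a member of the family `𝔉₄ = {θ_{2,2,2k} : k ≥ 2}`. -/
def ContainsF4 {V : Type} (G : SimpleGraph V) : Prop :=
  ∃ k : ℕ, 2 ≤ k ∧ HasTheta G 2 2 (2 * k)

/- # The core of a graph -/

open Classical in
/-- Delete from `S` all vertices having exactly one neighbour (in `G`) inside `S`. -/
noncomputable def coreStep {V : Type} [DecidableEq V] (G : SimpleGraph V)
    (S : Finset V) : Finset V :=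
  S.filter fun v => ¬ ((S.filter fun w => G.Adj v w).card = 1)

/-- The vertex set of the core of `G`: iteratively delete all vertices of degree 1. -/
noncomputable def coreSet {V : Type} [Fintype V] [DecidableEq V] (G : SimpleGraph V) :
    Finset V :=
  (coreStep G)^[Fintype.card V] Finset.univ

/-- The core of `G`: the subgraph of `G` obtained by the iterated removal of all
vertices of degree 1. -/
noncomputable def coreGraph {V : Type} [Fintype V] [DecidableEq V] (G : SimpleGraph V) :
    SimpleGraph ↥((coreSet G : Set V)) :=
  G.induce (coreSet G : Set V)

end PaintGame

open SimpleGraph PaintGame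

namespace Aux

lemma paintFromIn_of_lt {V : Type} [DecidableEq V] (G : SimpleGraph V) :
    ∀ (t : ℕ) (f : V → ℕ) (U : Finset V) (w : V), t < f w → PaintFromIn G t f U
  | 0, f, U, w, h => Or.inr ⟨w, by omega⟩
  | (t+1), f, U, w, h => fun M _ _ =>
      ⟨∅, by simp, by intro u hu; simp at hu,
        paintFromIn_of_lt G t _ _ w (by simp only [decMark]; split <;> omega)⟩

lemma paintFromIn_of_sum_lt {V : Type} [Fintype V] [DecidableEq V] (G : SimpleGraph V) :
    ∀ (t : ℕ) (f : V → ℕ) (U : Finset V), ∑ v, f v < t → PaintFromIn G t f U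
  | 0, f, U, h => absurd h (by omega)
  | (t+1), f, U, h => fun M hne hf =>
      ⟨∅, by simp, by intro u hu; simp at hu,
        paintFromIn_of_sum_lt G t _ _ (by
          have := PaintGame.decMark_lt f M hne hf
          omega)⟩

lemma sum_decMark_ge {V : Type} [DecidableEq V] (f : V → ℕ) (M S : Finset V) (hMS : M ⊆ S) :
    ∑ v ∈ S, f v ≤ M.card + ∑ v ∈ S, decMark f M v := by
  have h1 : ∑ v ∈ S, f v ≤ ∑ v ∈ S, ((if v ∈ M then 1 else 0) + decMark f M v) := by
    apply Finset.sum_le_sum; intro v _; simp only [decMark]; split <;> omega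
  rw [Finset.sum_add_distrib] at h1
  have h2 : ∑ v ∈ S, (if v ∈ M then (1:ℕ) else 0) = M.card := by
    rw [Finset.sum_ite_mem, Finset.inter_eq_right.mpr hMS, Finset.sum_const, smul_eq_mul,
      mul_one]
  omega



lemma key {V W : Type} [Fintype V] [DecidableEq V] [Fintype W] [DecidableEq W]
    (G : SimpleGraph V) (H : SimpleGraph W) (φ : H →g G) (hφ : Function.Injective φ)
    (S : Finset V) (hSr : ∀ v : V, v ∈ S ↔ v ∉ Set.range φ) :
    ∀ (k t : ℕ) (fG : V → ℕ) (hH : W → ℕ) (UG : Finset V) (UH : Finset W),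
      (∀ w, fG (φ w) = hH w) → (∀ v ∈ S, fG v ≤ k) → t ≤ k →
      k ≤ t + ∑ v ∈ S, fG v → (∀ w ∈ UH, φ w ∈ UG) →
      ¬ PaintFromIn H t hH UH → ¬ PaintFromIn G k fG UG := by
  intro k
  induction k with
  | zero =>
    intro t fG hH UG UH hfh hle ht _ hUsub hHt hp
    interval_cases t
    rw [PaintFromIn] at hHt hp
    push_neg at hHt
    obtain ⟨hUHne, hh0⟩ := hHt
    rcases hp with hp | ⟨v, hv⟩
    · obtain ⟨w, hw⟩ := hUHne
      exact absurd (hUsub w hw) (by simp [hp])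
    · by_cases hvr : v ∈ Set.range φ
      · obtain ⟨w, rfl⟩ := hvr
        exact hv (by rw [hfh]; exact hh0 w)
      · have := hle v ((hSr v).mpr hvr)
        omega
  | succ k IH =>
    intro t fG hH UG UH hfh hle ht hσ hUsub hHt hp
    rw [PaintFromIn] at hp
    set A : Finset V := S.filter (fun v => fG v = k + 1) with hA
    have hAS : A ⊆ S := Finset.filter_subset _ _
    have hAval : ∀ v ∈ A, fG v = k + 1 := fun v hv => (Finset.mem_filter.mp hv).2
    rcases Nat.lt_or_ge t (k+1) with htlt | htge
    · -- extra round: mark only vertices of S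
      have hstep : ∀ M : Finset V, M ⊆ S → M.Nonempty → (∀ v ∈ M, 1 ≤ fG v) →
          (∀ v ∈ S, decMark fG M v ≤ k) →
          (k ≤ t + ∑ v ∈ S, decMark fG M v) → False := by
        intro M hMS hMne hM1 hdec hksum
        obtain ⟨X, hXsub, hXind, hXp⟩ := hp M hMne hM1
        refine IH t (decMark fG M) hH (UG \ X) UH ?_ hdec (by omega) hksum ?_ hHt hXp
        · intro w
          have : φ w ∉ M := fun hmem => (hSr (φ w)).mp (hMS hmem) ⟨w, rfl⟩
          simp [decMark, this, hfh w]
        · intro w hw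
          rw [Finset.mem_sdiff]
          refine ⟨hUsub w hw, fun hX => ?_⟩
          have : φ w ∈ M := (Finset.mem_inter.mp (hXsub hX)).1
          exact (hSr (φ w)).mp (hMS this) ⟨w, rfl⟩
      rcases A.eq_empty_or_nonempty with hAe | hAne
      · -- no forced vertex: mark a single vertex of S with positive residual
        have hpos : ∃ v ∈ S, 1 ≤ fG v := by
          by_contra hno
          push_neg at hno
          have : ∑ v ∈ S, fG v = 0 :=
            Finset.sum_eq_zero (fun v hv => by have := hno v hv; omega)
          omega
        obtain ⟨v₀, hv₀S, hv₀1⟩ := hpos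
        have hnotA : ∀ v ∈ S, fG v ≤ k := by
          intro v hv
          have : v ∉ A := by rw [hAe]; exact Finset.notMem_empty v
          have : ¬ (fG v = k + 1) := fun hc => this (Finset.mem_filter.mpr ⟨hv, hc⟩)
          have := hle v hv
          omega
        refine hstep {v₀} (Finset.singleton_subset_iff.mpr hv₀S) ⟨v₀, Finset.mem_singleton_self v₀⟩
          (by simpa using hv₀1) ?_ ?_
        · intro v hv
          simp only [decMark, Finset.mem_singleton]
          have := hnotA v hv
          split <;> omega
        · have := sum_decMark_ge fG {v₀} S (Finset.singleton_subset_iff.mpr hv₀S)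
          simp only [Finset.card_singleton] at this
          omega
      · -- forced vertices exist: mark exactly them
        have hcard : A.card * (k + 1) ≤ ∑ v ∈ S, fG v := by
          have h1 : ∑ v ∈ A, fG v = A.card * (k + 1) := by
            rw [Finset.sum_congr rfl hAval, Finset.sum_const, smul_eq_mul]
          calc A.card * (k+1) = ∑ v ∈ A, fG v := h1.symm
            _ ≤ ∑ v ∈ S, fG v := Finset.sum_le_sum_of_subset hAS
        have hA1 : 1 ≤ A.card := Finset.card_pos.mpr hAne
        refine hstep A hAS hAne (fun v hv => by rw [hAval v hv]; omega) ?_ ?_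
        · intro v hv
          simp only [decMark]
          by_cases hvA : v ∈ A
          · rw [if_pos hvA, hAval v hvA]; omega
          · rw [if_neg hvA]
            have : ¬ (fG v = k + 1) := fun hc => hvA (Finset.mem_filter.mpr ⟨hv, hc⟩)
            have := hle v hv
            omega
        · have := sum_decMark_ge fG A S hAS
          nlinarith
    · -- main round: t = k + 1, play the Lister strategy from H
      have htk : t = k + 1 := by omega
      subst htk
      rw [PaintFromIn] at hHt
      push_neg at hHt
      obtain ⟨MH, hMHne, hMH1, hMHstrat⟩ := hHt
      set M : Finset V := MH.image φ ∪ A with hM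
      have hMmem : ∀ w : W, φ w ∈ M ↔ w ∈ MH := by
        intro w
        constructor
        · intro hmem
          rcases Finset.mem_union.mp hmem with hmem | hmem
          · obtain ⟨w', hw', he⟩ := Finset.mem_image.mp hmem
            rwa [← hφ he]
          · exact absurd ⟨w, rfl⟩ ((hSr (φ w)).mp (hAS hmem))
        · intro hmem
          exact Finset.mem_union_left _ (Finset.mem_image_of_mem φ hmem)
      have hMne : M.Nonempty := by
        obtain ⟨w, hw⟩ := hMHne
        exact ⟨φ w, (hMmem w).mpr hw⟩
      have hM1 : ∀ v ∈ M, 1 ≤ fG v := by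
        intro v hv
        rcases Finset.mem_union.mp hv with hv | hv
        · obtain ⟨w', hw', rfl⟩ := Finset.mem_image.mp hv
          rw [hfh]; exact hMH1 w' hw'
        · rw [hAval v hv]; omega
      obtain ⟨X, hXsub, hXind, hXp⟩ := hp M hMne hM1
      set XH : Finset W := (MH ∩ UH).filter (fun w => φ w ∈ X) with hXH
      have hXHsub : XH ⊆ MH ∩ UH := Finset.filter_subset _ _
      have hXHind : IndepOn H XH := by
        intro u hu w hw hadj
        have hu' : φ u ∈ X := (Finset.mem_filter.mp hu).2
        have hw' : φ w ∈ X := (Finset.mem_filter.mp hw).2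
        exact hXind _ hu' _ hw' (φ.map_adj hadj)
      have hHk := hMHstrat XH hXHsub hXHind
      refine IH k (decMark fG M) (decMark hH MH) (UG \ X) (UH \ XH) ?_ ?_ le_rfl
        (by omega) ?_ hHk hXp
      · intro w
        simp only [decMark, hMmem w]
        split <;> rw [hfh]
      · intro v hv
        simp only [decMark]
        by_cases hvM : v ∈ M
        · have hvA : v ∈ A := by
            rcases Finset.mem_union.mp hvM with hm | hm
            · obtain ⟨w', _, rfl⟩ := Finset.mem_image.mp hm
              exact absurd ⟨w', rfl⟩ ((hSr (φ w')).mp hv)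
            · exact hm
          rw [if_pos hvM, hAval v hvA]; omega
        · rw [if_neg hvM]
          have : ¬ (fG v = k + 1) := fun hc =>
            hvM (Finset.mem_union_right _ (Finset.mem_filter.mpr ⟨hv, hc⟩))
          have := hle v hv
          omega
      · intro w hw
        obtain ⟨hwU, hwX⟩ := Finset.mem_sdiff.mp hw
        rw [Finset.mem_sdiff]
        refine ⟨hUsub w hwU, fun hX => ?_⟩
        have hwM : w ∈ MH := (hMmem w).mp (Finset.mem_inter.mp (hXsub hX)).1
        exact hwX (Finset.mem_filter.mpr ⟨Finset.mem_inter.mpr ⟨hwM, hwU⟩, hX⟩)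

end Aux

open Classical in
/-- Lemma `subgraph`.  Suppose the game `(G,f)` contains `(H,h)` (i.e.
`H` is a subgraph of `G`, via the injective homomorphism `φ`, on which `f` agrees with
`h`), with `V(G) \ V(H)` nonempty, and let `K = max {f v : v ∈ V(G) \ V(H)}`.  If `H` is
not `[h,t]`-paintable then `G` is not `[f,k]`-paintable for every `k` with
`max t K ≤ k ≤ t + Σ_{v ∈ V(G)\V(H)} f v`.  In particular `m(G,f) ≤ max K (m(H,h))` and
`M(G,f) ≥ M(H,h) + Σ_{v ∈ V(G)\V(H)} f v`. -/
theorem not_paintableIn_of_subgraph {V W : Type} [Fintype V] [DecidableEq V]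
    [Fintype W] [DecidableEq W] (G : SimpleGraph V) (H : SimpleGraph W)
    (φ : H →g G) (hφ : Function.Injective φ)
    (f : V → ℕ) (h : W → ℕ) (hfh : ∀ w : W, f (φ w) = h w)
    (S : Finset V) (hS : S = Finset.univ.filter (fun v => v ∉ Set.range φ))
    (hSne : S.Nonempty) (K : ℕ) (hK : K = S.sup f)
    (t : ℕ) (ht : ¬ PaintGame.PaintableIn H h t) :
    (∀ k : ℕ, max t K ≤ k → k ≤ t + ∑ v ∈ S, f v → ¬ PaintGame.PaintableIn G f k) ∧
      PaintGame.mval G f ≤ max K (PaintGame.mval H h) ∧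
      PaintGame.Mval H h + ∑ v ∈ S, f v ≤ PaintGame.Mval G f := by
  have hSr : ∀ v : V, v ∈ S ↔ v ∉ Set.range φ := by
    subst hS; intro v; simp
  have hht : ∀ w, h w ≤ t := by
    intro w
    by_contra hc
    push_neg at hc
    exact ht (Aux.paintFromIn_of_lt H t h Finset.univ w hc)
  have hKsum : K ≤ ∑ v ∈ S, f v := by
    rw [hK]
    exact Finset.sup_le fun v hv => Finset.single_le_sum (fun i _ => Nat.zero_le _) hv
  have main : ∀ k : ℕ, max t K ≤ k → k ≤ t + ∑ v ∈ S, f v → ¬ PaintableIn G f k := by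
    intro k hk1 hk2
    have hKk : K ≤ k := le_trans (le_max_right t K) hk1
    exact Aux.key G H φ hφ S hSr k t f h Finset.univ Finset.univ hfh
      (fun v hv => le_trans (by rw [hK]; exact Finset.le_sup hv) hKk)
      (le_trans (le_max_left t K) hk1) hk2 (fun w _ => Finset.mem_univ _) ht
  refine ⟨main, ?_, ?_⟩
  · -- mval bound
    have hmH : mval H h ∈ {t' | (∀ w, h w ≤ t') ∧ ¬ PaintableIn H h t'} := by
      unfold PaintGame.mval
      exact Nat.sInf_mem ⟨t, hht, ht⟩
    have hG2 : ¬ PaintableIn G f (max K (mval H h)) :=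
      Aux.key G H φ hφ S hSr (max K (mval H h)) (mval H h) f h Finset.univ Finset.univ hfh
        (fun v hv => le_trans (by rw [hK]; exact Finset.le_sup hv) (le_max_left _ _))
        (le_max_right _ _)
        (max_le (le_trans hKsum (Nat.le_add_left _ _)) (Nat.le_add_right _ _))
        (fun w _ => Finset.mem_univ _) hmH.2
    unfold PaintGame.mval
    apply Nat.sInf_le
    refine ⟨?_, hG2⟩
    intro v
    by_cases hvr : v ∈ Set.range φ
    · obtain ⟨w, rfl⟩ := hvr
      rw [hfh]
      exact le_trans (hmH.1 w) (le_max_right _ _)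
    · exact le_trans (by rw [hK]; exact Finset.le_sup ((hSr v).mpr hvr)) (le_max_left _ _)
  · -- Mval bound
    have hbddH : BddAbove {t' | ¬ PaintableIn H h t'} := by
      refine ⟨∑ w, h w, fun x hx => ?_⟩
      by_contra hc
      push_neg at hc
      exact hx (Aux.paintFromIn_of_sum_lt H x h Finset.univ hc)
    have hMH : ¬ PaintableIn H h (Mval H h) := by
      have : Mval H h ∈ {t' | ¬ PaintableIn H h t'} := by
        unfold PaintGame.Mval
        exact Nat.sSup_mem ⟨t, ht⟩ hbddH
      exact this
    have hG3 : ¬ PaintableIn G f (Mval H h + ∑ v ∈ S, f v) :=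
      Aux.key G H φ hφ S hSr (Mval H h + ∑ v ∈ S, f v) (Mval H h) f h
        Finset.univ Finset.univ hfh
        (fun v hv => le_trans
          (Finset.single_le_sum (fun i _ => Nat.zero_le _) hv) (Nat.le_add_left _ _))
        (Nat.le_add_right _ _) le_rfl (fun w _ => Finset.mem_univ _) hMH
    have hbddG : BddAbove {t' | ¬ PaintableIn G f t'} := by
      refine ⟨∑ v, f v, fun x hx => ?_⟩
      by_contra hc
      push_neg at hc
      exact hx (Aux.paintFromIn_of_sum_lt G x f Finset.univ hc)
    unfold PaintGame.Mval
    exact le_csSup hbddG hG3
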